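/- A B-grafted graph G(H_0; B_1,...,B_p) is unmixed if and only if every bipartite graph B_i is unmixed, for i = 1,...,p. -/

import Mathlib

open SimpleGraph

/-- `C` is a vertex cover of `G`. -/
def IsVC {V : Type*} (G : SimpleGraph V) (C : Set V) : Prop :=
  ∀ ⦃u v : V⦄, G.Adj u v → u ∈ C ∨ v ∈ C

/-- `C` is a minimal (inclusion-wise) vertex cover of `G`. -/
def IsMinVC {V : Type*} (G : SimpleGraph V) (C : Set V) : Prop :=
  IsVC G C ∧ ∀ C' : Set V, C' ⊆ C → IsVC G C' → C' = C

/-- `A` is an independent set of `G`. -/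
def IsIndep {V : Type*} (G : SimpleGraph V) (A : Set V) : Prop :=
  ∀ ⦃u v : V⦄, u ∈ A → v ∈ A → ¬ G.Adj u v

/-- `A` is a maximal independent set of `G`. -/
def IsMaxIndep {V : Type*} (G : SimpleGraph V) (A : Set V) : Prop :=
  IsIndep G A ∧ ∀ A' : Set V, A ⊆ A' → IsIndep G A' → A' = A

/-- `G` is unmixed: all minimal vertex covers have the same cardinality. -/
def Unmixed {V : Type*} (G : SimpleGraph V) : Prop :=
  ∀ C₁ C₂ : Set V, IsMinVC G C₁ → IsMinVC G C₂ → C₁.ncard = C₂.ncard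

/-- The B-grafted graph `G(H₀; B_1, …, B_p)`. Vertices: `X = Σ i, X_i` (left) and
`Y = Σ i, Y_i` (right), where `X_i = Y_i = Fin (n i)`. The relation `b` records the edges
of the bipartite graphs `B_i` (an `X_i`-vertex and a `Y_i`-vertex with the same index `i`).
Edges of `G`: `x x'` for `x ∈ X_i`, `x' ∈ X_j` with `ij ∈ E(H₀)`, and `x y` for
`x ∈ X_i`, `y ∈ Y_i` with `xy ∈ E(B_i)`. -/
def BGraft {p : ℕ} (H0 : SimpleGraph (Fin p)) {n : Fin p → ℕ}
    (b : (Σ i : Fin p, Fin (n i)) → (Σ i : Fin p, Fin (n i)) → Prop) :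
    SimpleGraph ((Σ i : Fin p, Fin (n i)) ⊕ (Σ i : Fin p, Fin (n i))) where
  Adj u v :=
    match u, v with
    | Sum.inl a, Sum.inl a' => H0.Adj a.1 a'.1
    | Sum.inl a, Sum.inr c => a.1 = c.1 ∧ b a c
    | Sum.inr c, Sum.inl a => a.1 = c.1 ∧ b a c
    | Sum.inr _, Sum.inr _ => False
  symm := by
    refine ⟨?_⟩
    rintro (a | c) (a' | c') h
    · exact H0.adj_symm h
    · exact h
    · exact h
    · exact h.elim
  loopless := by
    refine ⟨?_⟩
    rintro (a | c) h
    · exact H0.irrefl h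
    · exact h

/-- The bipartite graph `B_i`, on vertex set `X_i ⊕ Y_i`. -/
def BiGraph {p : ℕ} {n : Fin p → ℕ}
    (b : (Σ i : Fin p, Fin (n i)) → (Σ i : Fin p, Fin (n i)) → Prop) (i : Fin p) :
    SimpleGraph (Fin (n i) ⊕ Fin (n i)) where
  Adj u v :=
    match u, v with
    | Sum.inl a, Sum.inr c => b ⟨i, a⟩ ⟨i, c⟩
    | Sum.inr c, Sum.inl a => b ⟨i, a⟩ ⟨i, c⟩
    | _, _ => False
  symm := ⟨by rintro (a | c) (a' | c') h <;> exact h⟩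
  loopless := ⟨by rintro (a | c) h <;> exact h⟩


section Aux
variable {p : ℕ} {n : Fin p → ℕ}

/-- embedding of the `i`-th block -/
def bemb (i : Fin p) : (Fin (n i) ⊕ Fin (n i)) → ((Σ j : Fin p, Fin (n j)) ⊕ (Σ j : Fin p, Fin (n j))) :=
  Sum.map (fun a => (⟨i, a⟩ : Σ j : Fin p, Fin (n j))) (fun c => (⟨i, c⟩ : Σ j : Fin p, Fin (n j)))

lemma bemb_inj (i : Fin p) : Function.Injective (bemb (n := n) i) := by
  rintro (a|a) (c|c) h <;> simp [bemb] at h <;> simp [h]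

def bidx : ((Σ j : Fin p, Fin (n j)) ⊕ (Σ j : Fin p, Fin (n j))) → Fin p :=
  Sum.elim Sigma.fst Sigma.fst

lemma bidx_bemb (i : Fin p) (d : Fin (n i) ⊕ Fin (n i)) : bidx (bemb (n := n) i d) = i := by
  rcases d with a | c <;> rfl

lemma ncard_fiber {α ι : Type*} [Fintype α] [Fintype ι] (f : α → ι) (s : Set α) :
    s.ncard = ∑ i : ι, (s ∩ f ⁻¹' {i}).ncard := by
  classical
  rw [Set.ncard_eq_toFinset_card s s.toFinite]
  have h : s.toFinite.toFinset =
      Finset.univ.biUnion (fun i => (s ∩ f ⁻¹' {i}).toFinite.toFinset) := by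
    ext x
    simp only [Set.Finite.mem_toFinset, Finset.mem_biUnion, Finset.mem_univ, true_and,
      Set.mem_inter_iff, Set.mem_preimage, Set.mem_singleton_iff]
    exact ⟨fun hx => ⟨f x, hx, rfl⟩, fun ⟨_, hx, _⟩ => hx⟩
  rw [h, Finset.card_biUnion]
  · exact Finset.sum_congr rfl fun i _ => (Set.ncard_eq_toFinset_card _ _).symm
  · intro i _ j _ hij
    simp only [Finset.disjoint_left, Set.Finite.mem_toFinset]
    rintro a ⟨_, ha⟩ ⟨_, hb⟩
    simp only [Set.mem_preimage, Set.mem_singleton_iff] at ha hb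
    exact hij (ha ▸ hb)

end Aux

section Main
variable {p : ℕ} (H0 : SimpleGraph (Fin p)) {n : Fin p → ℕ}
  (b : (Σ i : Fin p, Fin (n i)) → (Σ i : Fin p, Fin (n i)) → Prop)

/-- "outer" part: all X-vertices with index ≠ i. -/
def outer (i : Fin p) : Set ((Σ j : Fin p, Fin (n j)) ⊕ (Σ j : Fin p, Fin (n j))) :=
  {v | ∃ j : Fin p, ∃ x : Fin (n j), j ≠ i ∧ v = Sum.inl ⟨j, x⟩}

lemma outer_minVC (hb1 : ∀ (i : Fin p) (a : Fin (n i)), ∃ c : Fin (n i), b ⟨i, a⟩ ⟨i, c⟩)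
    (i : Fin p) (D : Set (Fin (n i) ⊕ Fin (n i))) (hD : IsMinVC (BiGraph b i) D) :
    IsMinVC (BGraft H0 b) (outer (n := n) i ∪ bemb i '' D) := by
  constructor
  · -- vertex cover
    rintro (⟨j, x⟩ | ⟨j, y⟩) (⟨k, x'⟩ | ⟨k, y'⟩) huv
    · -- X–X edge
      have hadj : H0.Adj j k := huv
      rcases eq_or_ne j i with rfl | hj
      · exact Or.inr (Or.inl ⟨k, x', hadj.ne', rfl⟩)
      · exact Or.inl (Or.inl ⟨j, x, hj, rfl⟩)
    · -- X–Y edge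
      obtain ⟨hjk, hbxy⟩ := (huv : j = k ∧ b ⟨j, x⟩ ⟨k, y'⟩)
      subst hjk
      rcases eq_or_ne j i with rfl | hj
      · rcases hD.1 (show (BiGraph b j).Adj (Sum.inl x) (Sum.inr y') from hbxy) with h | h
        · exact Or.inl (Or.inr ⟨Sum.inl x, h, rfl⟩)
        · exact Or.inr (Or.inr ⟨Sum.inr y', h, rfl⟩)
      · exact Or.inl (Or.inl ⟨j, x, hj, rfl⟩)
    · -- Y–X edge
      obtain ⟨hjk, hbxy⟩ := (huv : k = j ∧ b ⟨k, x'⟩ ⟨j, y⟩)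
      subst hjk
      rcases eq_or_ne k i with rfl | hj
      · rcases hD.1 (show (BiGraph b k).Adj (Sum.inl x') (Sum.inr y) from hbxy) with h | h
        · exact Or.inr (Or.inr ⟨Sum.inl x', h, rfl⟩)
        · exact Or.inl (Or.inr ⟨Sum.inr y, h, rfl⟩)
      · exact Or.inr (Or.inl ⟨k, x', hj, rfl⟩)
    · exact absurd huv not_false
  · -- minimality
    intro C' hsub hC'
    apply Set.Subset.antisymm hsub
    rintro v (⟨j, x, hj, rfl⟩ | ⟨d, hd, rfl⟩)
    · -- outer vertex: forced by its B_j neighbour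
      obtain ⟨c, hc⟩ := hb1 j x
      have hadj : (BGraft H0 b).Adj (Sum.inl ⟨j, x⟩) (Sum.inr ⟨j, c⟩) := ⟨rfl, hc⟩
      rcases hC' hadj with h | h
      · exact h
      · exfalso
        rcases hsub h with ⟨j', x', _, h'⟩ | ⟨d', _, h'⟩
        · simp at h'
        · rcases d' with a' | c'
          · simp [bemb] at h'
          · refine hj ?_
            have := congrArg bidx h'
            rw [bidx_bemb] at this
            simpa [bidx] using this.symm
    · -- vertex of the i-block: forced by minimality of D
      have hDsub : bemb (n := n) i ⁻¹' C' ⊆ D := by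
        intro e he
        rcases hsub he with ⟨j', x', hj', h'⟩ | ⟨e', he', h'⟩
        · exfalso
          refine hj' ?_
          rcases e with a | c
          · have := congrArg bidx h'
            rw [bidx_bemb] at this
            simpa [bidx] using this.symm
          · simp [bemb] at h'
        · exact (bemb_inj i h') ▸ he'
      have hDVC : IsVC (BiGraph b i) (bemb (n := n) i ⁻¹' C') := by
        rintro (a | c) (a' | c') hadj
        · exact absurd hadj not_false
        · rcases hC' (show (BGraft H0 b).Adj (Sum.inl ⟨i, a⟩) (Sum.inr ⟨i, c'⟩) from ⟨rfl, hadj⟩)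
            with h | h
          · exact Or.inl h
          · exact Or.inr h
        · rcases hC' (show (BGraft H0 b).Adj (Sum.inl ⟨i, a'⟩) (Sum.inr ⟨i, c⟩) from ⟨rfl, hadj⟩)
            with h | h
          · exact Or.inr h
          · exact Or.inl h
        · exact absurd hadj not_false
      have := hD.2 _ hDsub hDVC
      have hd' : d ∈ bemb (n := n) i ⁻¹' C' := this.symm ▸ hd
      exact hd'

lemma outer_union_ncard (i : Fin p) (D : Set (Fin (n i) ⊕ Fin (n i))) :
    (outer (n := n) i ∪ bemb i '' D).ncard = (outer (n := n) i).ncard + D.ncard := by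
  rw [Set.ncard_union_eq ?_ (Set.toFinite _) (Set.toFinite _),
    Set.ncard_image_of_injective _ (bemb_inj i)]
  rw [Set.disjoint_left]
  rintro v ⟨j, x, hj, rfl⟩ ⟨d, _, h'⟩
  rcases d with a | c
  · refine hj ?_
    have := congrArg bidx h'
    rw [bidx_bemb] at this
    simpa [bidx] using this.symm
  · simp [bemb] at h'

end Main

section Back
variable {p : ℕ} (H0 : SimpleGraph (Fin p)) {n : Fin p → ℕ}
  (b : (Σ i : Fin p, Fin (n i)) → (Σ i : Fin p, Fin (n i)) → Prop)

lemma mem_bemb_image_idx {i : Fin p} {T : Set (Fin (n i) ⊕ Fin (n i))}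
    {v : (Σ j : Fin p, Fin (n j)) ⊕ (Σ j : Fin p, Fin (n j))}
    (h : v ∈ bemb i '' T) : bidx v = i := by
  rcases h with ⟨d, _, rfl⟩; exact bidx_bemb i d

lemma xfull_minVC (hb1 : ∀ (i : Fin p) (a : Fin (n i)), ∃ c : Fin (n i), b ⟨i, a⟩ ⟨i, c⟩)
    (i : Fin p) : IsMinVC (BiGraph b i) (Set.range Sum.inl) := by
  constructor
  · rintro (a | c) (a' | c') hadj
    · exact absurd hadj not_false
    · exact Or.inl ⟨a, rfl⟩
    · exact Or.inr ⟨a', rfl⟩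
    · exact absurd hadj not_false
  · intro C' hsub hC'
    apply Set.Subset.antisymm hsub
    rintro v ⟨a, rfl⟩
    obtain ⟨c, hc⟩ := hb1 i a
    rcases hC' (show (BiGraph b i).Adj (Sum.inl a) (Sum.inr c) from hc) with h | h
    · exact h
    · obtain ⟨a', ha'⟩ := hsub h
      simp at ha'

lemma xfull_ncard (i : Fin p) :
    (Set.range (Sum.inl : Fin (n i) → Fin (n i) ⊕ Fin (n i))).ncard = n i := by
  rw [← Set.image_univ, Set.ncard_image_of_injective _ Sum.inl_injective, Set.ncard_univ]
  simp

lemma minVC_ncard (hb1 : ∀ (i : Fin p) (a : Fin (n i)), ∃ c : Fin (n i), b ⟨i, a⟩ ⟨i, c⟩)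
    (hB : ∀ i : Fin p, Unmixed (BiGraph b i))
    (C : Set ((Σ j : Fin p, Fin (n j)) ⊕ (Σ j : Fin p, Fin (n j))))
    (hC : IsMinVC (BGraft H0 b) C) : C.ncard = ∑ i : Fin p, n i := by
  classical
  rw [ncard_fiber bidx C]
  refine Finset.sum_congr rfl fun i _ => ?_
  by_cases hS : ∀ x : Fin (n i), Sum.inl (⟨i, x⟩ : Σ j : Fin p, Fin (n j)) ∈ C
  · -- X_i ⊆ C : the i-block of C is exactly X_i
    have step1 : ∀ y : Fin (n i), Sum.inr (⟨i, y⟩ : Σ j : Fin p, Fin (n j)) ∉ C := by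
      intro y hy
      have hVC' : IsVC (BGraft H0 b) (C \ {Sum.inr ⟨i, y⟩}) := by
        rintro (⟨j, x⟩ | ⟨j, y'⟩) (⟨k, x'⟩ | ⟨k, y'⟩) huv
        · rcases hC.1 huv with h | h
          · exact Or.inl ⟨h, by simp⟩
          · exact Or.inr ⟨h, by simp⟩
        · obtain ⟨hjk, hb'⟩ := (huv : j = k ∧ b ⟨j, x⟩ ⟨k, y'⟩)
          subst hjk
          by_cases hji : j = i
          · subst hji
            by_cases hyy : y' = y
            · exact Or.inl ⟨hS x, by simp⟩
            · rcases hC.1 (show (BGraft H0 b).Adj (Sum.inl ⟨j, x⟩) (Sum.inr ⟨j, y'⟩)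
                  from ⟨rfl, hb'⟩) with h | h
              · exact Or.inl ⟨h, by simp⟩
              · exact Or.inr ⟨h, by simp [hyy]⟩
          · rcases hC.1 (show (BGraft H0 b).Adj (Sum.inl ⟨j, x⟩) (Sum.inr ⟨j, y'⟩)
                from ⟨rfl, hb'⟩) with h | h
            · exact Or.inl ⟨h, by simp⟩
            · exact Or.inr ⟨h, by simp [hji]⟩
        · obtain ⟨hjk, hb'⟩ := (huv : k = j ∧ b ⟨k, x'⟩ ⟨j, y'⟩)
          subst hjk
          by_cases hji : k = i
          · subst hji
            by_cases hyy : y' = y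
            · exact Or.inr ⟨hS x', by simp⟩
            · rcases hC.1 (show (BGraft H0 b).Adj (Sum.inr ⟨k, y'⟩) (Sum.inl ⟨k, x'⟩)
                  from ⟨rfl, hb'⟩) with h | h
              · exact Or.inl ⟨h, by simp [hyy]⟩
              · exact Or.inr ⟨h, by simp⟩
          · rcases hC.1 (show (BGraft H0 b).Adj (Sum.inr ⟨k, y'⟩) (Sum.inl ⟨k, x'⟩)
                from ⟨rfl, hb'⟩) with h | h
            · exact Or.inl ⟨h, by simp [hji]⟩
            · exact Or.inr ⟨h, by simp⟩
        · exact absurd huv not_false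
      have hEq := hC.2 _ Set.diff_subset hVC'
      have : Sum.inr (⟨i, y⟩ : Σ j : Fin p, Fin (n j)) ∈ C \ {Sum.inr ⟨i, y⟩} := hEq.symm ▸ hy
      simp at this
    have hset : C ∩ bidx ⁻¹' {i} = bemb i '' (Set.range Sum.inl) := by
      ext v
      constructor
      · rintro ⟨hvC, hvI⟩
        rcases v with ⟨j, x⟩ | ⟨j, y⟩
        · have hj : j = i := hvI
          subst hj
          exact ⟨Sum.inl x, ⟨x, rfl⟩, rfl⟩
        · have hj : j = i := hvI
          subst hj
          exact absurd hvC (step1 y)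
      · rintro ⟨d, ⟨x, rfl⟩, rfl⟩
        exact ⟨hS x, rfl⟩
    rw [hset, Set.ncard_image_of_injective _ (bemb_inj i), xfull_ncard]
  · -- X_i ⊄ C : the i-block of C is a minimal vertex cover of B_i
    push_neg at hS
    obtain ⟨x0, hx0⟩ := hS
    have step0 : ∀ k : Fin p, H0.Adj i k → ∀ x' : Fin (n k),
        Sum.inl (⟨k, x'⟩ : Σ j : Fin p, Fin (n j)) ∈ C := by
      intro k hk x'
      rcases hC.1 (show (BGraft H0 b).Adj (Sum.inl ⟨i, x0⟩) (Sum.inl ⟨k, x'⟩) from hk) with h | h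
      · exact absurd h hx0
      · exact h
    set D : Set (Fin (n i) ⊕ Fin (n i)) := bemb i ⁻¹' C with hDdef
    have hDVC : IsVC (BiGraph b i) D := by
      rintro (a | c) (a' | c') hadj
      · exact absurd hadj not_false
      · exact hC.1 (show (BGraft H0 b).Adj (Sum.inl ⟨i, a⟩) (Sum.inr ⟨i, c'⟩) from ⟨rfl, hadj⟩)
      · exact (hC.1 (show (BGraft H0 b).Adj (Sum.inl ⟨i, a'⟩) (Sum.inr ⟨i, c⟩)
          from ⟨rfl, hadj⟩)).symm
      · exact absurd hadj not_false
    have hDmin : IsMinVC (BiGraph b i) D := by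
      refine ⟨hDVC, fun D' hsub hD'VC => ?_⟩
      set R : Set _ := bemb i '' (D \ D') with hRdef
      have hD'C : bemb i '' D' ⊆ C := fun v ⟨d, hd, hv⟩ => hv ▸ hsub hd
      have hD'notR : ∀ d ∈ D', bemb i d ∉ R := by
        rintro d hd ⟨e, he, heq⟩
        exact he.2 ((bemb_inj i heq) ▸ hd)
      have hC'VC : IsVC (BGraft H0 b) (C \ R) := by
        rintro (⟨j, x⟩ | ⟨j, y⟩) (⟨k, x'⟩ | ⟨k, y'⟩) huv
        · have hadj : H0.Adj j k := huv
          by_cases hji : j = i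
          · subst hji
            refine Or.inr ⟨step0 k hadj x', fun hR => hadj.ne' ?_⟩
            exact (mem_bemb_image_idx hR : k = j)
          · by_cases hki : k = i
            · subst hki
              refine Or.inl ⟨step0 j hadj.symm x, fun hR => hji ?_⟩
              exact (mem_bemb_image_idx hR : j = k)
            · rcases hC.1 huv with h | h
              · exact Or.inl ⟨h, fun hR => hji (mem_bemb_image_idx hR)⟩
              · exact Or.inr ⟨h, fun hR => hki (mem_bemb_image_idx hR)⟩
        · obtain ⟨hjk, hb'⟩ := (huv : j = k ∧ b ⟨j, x⟩ ⟨k, y'⟩)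
          subst hjk
          by_cases hji : j = i
          · subst hji
            rcases hD'VC (show (BiGraph b j).Adj (Sum.inl x) (Sum.inr y') from hb') with h | h
            · exact Or.inl ⟨hD'C ⟨_, h, rfl⟩, hD'notR _ h⟩
            · exact Or.inr ⟨hD'C ⟨_, h, rfl⟩, hD'notR _ h⟩
          · rcases hC.1 (show (BGraft H0 b).Adj (Sum.inl ⟨j, x⟩) (Sum.inr ⟨j, y'⟩)
                from ⟨rfl, hb'⟩) with h | h
            · exact Or.inl ⟨h, fun hR => hji (mem_bemb_image_idx hR)⟩
            · exact Or.inr ⟨h, fun hR => hji (mem_bemb_image_idx hR)⟩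
        · obtain ⟨hjk, hb'⟩ := (huv : k = j ∧ b ⟨k, x'⟩ ⟨j, y⟩)
          subst hjk
          by_cases hji : k = i
          · subst hji
            rcases hD'VC (show (BiGraph b k).Adj (Sum.inl x') (Sum.inr y) from hb') with h | h
            · exact Or.inr ⟨hD'C ⟨_, h, rfl⟩, hD'notR _ h⟩
            · exact Or.inl ⟨hD'C ⟨_, h, rfl⟩, hD'notR _ h⟩
          · rcases hC.1 (show (BGraft H0 b).Adj (Sum.inr ⟨k, y⟩) (Sum.inl ⟨k, x'⟩)
                from ⟨rfl, hb'⟩) with h | h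
            · exact Or.inl ⟨h, fun hR => hji (mem_bemb_image_idx hR)⟩
            · exact Or.inr ⟨h, fun hR => hji (mem_bemb_image_idx hR)⟩
        · exact absurd huv not_false
      have hEq := hC.2 _ Set.diff_subset hC'VC
      refine Set.Subset.antisymm hsub fun d hd => ?_
      by_contra hd'
      have h1 : bemb i d ∈ C := hd
      have h2 : bemb i d ∈ C \ R := hEq.symm ▸ h1
      exact h2.2 ⟨d, ⟨hd, hd'⟩, rfl⟩
    have hset : C ∩ bidx ⁻¹' {i} = bemb i '' D := by
      ext v
      constructor
      · rintro ⟨hvC, hvI⟩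
        rcases v with ⟨j, x⟩ | ⟨j, y⟩
        · have hj : j = i := hvI
          subst hj
          exact ⟨Sum.inl x, hvC, rfl⟩
        · have hj : j = i := hvI
          subst hj
          exact ⟨Sum.inr y, hvC, rfl⟩
      · rintro ⟨d, hd, rfl⟩
        exact ⟨hd, bidx_bemb i d⟩
    rw [hset, Set.ncard_image_of_injective _ (bemb_inj i)]
    rw [hB i D (Set.range Sum.inl) hDmin (xfull_minVC b hb1 i), xfull_ncard]

end Back

/-- A B-grafted graph `G(H₀; B_1,…,B_p)` is unmixed if and only if every bipartite graph
`B_i` is unmixed. -/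
theorem bgraft_unmixed_iff {p : ℕ} (H0 : SimpleGraph (Fin p)) {n : Fin p → ℕ}
    (b : (Σ i : Fin p, Fin (n i)) → (Σ i : Fin p, Fin (n i)) → Prop)
    (hb1 : ∀ (i : Fin p) (a : Fin (n i)), ∃ c : Fin (n i), b ⟨i, a⟩ ⟨i, c⟩)
    (hb2 : ∀ (i : Fin p) (c : Fin (n i)), ∃ a : Fin (n i), b ⟨i, a⟩ ⟨i, c⟩) :
    Unmixed (BGraft H0 b) ↔ ∀ i : Fin p, Unmixed (BiGraph b i) := by
  constructor
  · intro hG i D D' hD hD'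
    have h := hG _ _ (outer_minVC H0 b hb1 i D hD) (outer_minVC H0 b hb1 i D' hD')
    rw [outer_union_ncard, outer_union_ncard] at h
    omega
  · intro hB C C' hC hC'
    rw [minVC_ncard H0 b hb1 hB C hC, minVC_ncard H0 b hb1 hB C' hC']
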